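/- Assume R₀ := BᵀB + σ²·B̄ᵀB̄ is positive definite. Fix τ ∈ (0,1) and let S_{δ_τ} := {X symmetric n×n : X ⪰ δ_τ·I and Tr X = 1}. Then for every P ∈ S_{δ_τ}: (a) Tr Φ(P) ≤ C_A; (b) (1−τ)·Φ(P) + (τ/n)·I ⪰ (τ/n)·I and Tr((1−τ)·Φ(P) + (τ/n)·I) ≤ (1−τ)·C_A + τ; (c) consequently Φ̂_τ(P) ⪰ δ_τ·I and Tr Φ̂_τ(P) = 1, i.e., Φ̂_τ maps S_{δ_τ} into itself. -/

import Mathlib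

open Matrix MeasureTheory ProbabilityTheory
open scoped ENNReal Classical

noncomputable section

namespace SCS

/-! ### Matrix-analytic definitions -/

/-- Rayleigh-quotient definition of the largest eigenvalue of a symmetric matrix. -/
def lamMax {n : ℕ} (M : Matrix (Fin n) (Fin n) ℝ) : ℝ :=
  ⨆ x : {x : Fin n → ℝ // x ⬝ᵥ x = 1}, x.1 ⬝ᵥ M.mulVec x.1

/-- Rayleigh-quotient definition of the smallest eigenvalue of a symmetric matrix. -/
def lamMin {n : ℕ} (M : Matrix (Fin n) (Fin n) ℝ) : ℝ :=
  ⨅ x : {x : Fin n → ℝ // x ⬝ᵥ x = 1}, x.1 ⬝ᵥ M.mulVec x.1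

/-- Spectral norm (the operator norm induced by the Euclidean norm). -/
def specNorm {p q : ℕ} (M : Matrix (Fin p) (Fin q) ℝ) : ℝ :=
  Real.sqrt (lamMax (Mᵀ * M))

variable {n m : ℕ}

/-- `R(P) = BᵀPB + σ²·B̄ᵀPB̄`. -/
def Rop (σ : ℝ) (B Bbar : Matrix (Fin n) (Fin m) ℝ) (P : Matrix (Fin n) (Fin n) ℝ) :
    Matrix (Fin m) (Fin m) ℝ :=
  Bᵀ * P * B + σ ^ 2 • (Bbarᵀ * P * Bbar)

/-- `S(P) = AᵀPB + σ²·ĀᵀPB̄`. -/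
def Sop (σ : ℝ) (A Abar : Matrix (Fin n) (Fin n) ℝ) (B Bbar : Matrix (Fin n) (Fin m) ℝ)
    (P : Matrix (Fin n) (Fin n) ℝ) : Matrix (Fin n) (Fin m) ℝ :=
  Aᵀ * P * B + σ ^ 2 • (Abarᵀ * P * Bbar)

/-- `Φ(P) = AᵀPA + σ²·ĀᵀPĀ − S(P)·R(P)⁻¹·S(P)ᵀ`. -/
def Phi (σ : ℝ) (A Abar : Matrix (Fin n) (Fin n) ℝ) (B Bbar : Matrix (Fin n) (Fin m) ℝ)
    (P : Matrix (Fin n) (Fin n) ℝ) : Matrix (Fin n) (Fin n) ℝ :=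
  Aᵀ * P * A + σ ^ 2 • (Abarᵀ * P * Abar)
    - Sop σ A Abar B Bbar P * (Rop σ B Bbar P)⁻¹ * (Sop σ A Abar B Bbar P)ᵀ

/-- `K(P) = R(P)⁻¹·S(P)ᵀ`. -/
def Kgain (σ : ℝ) (A Abar : Matrix (Fin n) (Fin n) ℝ) (B Bbar : Matrix (Fin n) (Fin m) ℝ)
    (P : Matrix (Fin n) (Fin n) ℝ) : Matrix (Fin m) (Fin n) ℝ :=
  (Rop σ B Bbar P)⁻¹ * (Sop σ A Abar B Bbar P)ᵀ

/-- `C_A = λ_max(AAᵀ + σ²·ĀĀᵀ)`. -/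
def CA (σ : ℝ) (A Abar : Matrix (Fin n) (Fin n) ℝ) : ℝ :=
  lamMax (A * Aᵀ + σ ^ 2 • (Abar * Abarᵀ))

/-- `δ_τ = (τ/n)/((1−τ)·C_A + τ)`. -/
def deltaTau (σ : ℝ) (A Abar : Matrix (Fin n) (Fin n) ℝ) (τ : ℝ) : ℝ :=
  (τ / (n : ℝ)) / ((1 - τ) * CA σ A Abar + τ)

/-- The regularized normalized operator
`Φ̂_τ(P) = ((1−τ)·Φ(P) + (τ/n)·I) / Tr((1−τ)·Φ(P) + (τ/n)·I)`. -/
def PhiHat (σ : ℝ) (A Abar : Matrix (Fin n) (Fin n) ℝ) (B Bbar : Matrix (Fin n) (Fin m) ℝ)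
    (τ : ℝ) (P : Matrix (Fin n) (Fin n) ℝ) : Matrix (Fin n) (Fin n) ℝ :=
  (Matrix.trace ((1 - τ) • Phi σ A Abar B Bbar P
      + (τ / (n : ℝ)) • (1 : Matrix (Fin n) (Fin n) ℝ)))⁻¹ •
    ((1 - τ) • Phi σ A Abar B Bbar P + (τ / (n : ℝ)) • (1 : Matrix (Fin n) (Fin n) ℝ))

/-- Inverse of the positive-semidefinite square root (junk value `0` off the PSD cone),
so `invSqrt P = P^{−1/2}` for positive definite `P`. -/
def invSqrt {n : ℕ} (P : Matrix (Fin n) (Fin n) ℝ) : Matrix (Fin n) (Fin n) ℝ :=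
  if h : P.PosSemidef then
    ((h.1.eigenvectorUnitary : Matrix (Fin n) (Fin n) ℝ) *
      diagonal ((↑) ∘ (√·) ∘ h.1.eigenvalues) *
      (star h.1.eigenvectorUnitary : Matrix (Fin n) (Fin n) ℝ))⁻¹ else 0

/-- `L(P) = λ_min(P^{−1/2}·Φ(P)·P^{−1/2})`. -/
def Lval (σ : ℝ) (A Abar : Matrix (Fin n) (Fin n) ℝ) (B Bbar : Matrix (Fin n) (Fin m) ℝ)
    (P : Matrix (Fin n) (Fin n) ℝ) : ℝ :=
  lamMin (invSqrt P * Phi σ A Abar B Bbar P * invSqrt P)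

/-- `U(P) = λ_max(P^{−1/2}·Φ(P)·P^{−1/2})`. -/
def Uval (σ : ℝ) (A Abar : Matrix (Fin n) (Fin n) ℝ) (B Bbar : Matrix (Fin n) (Fin m) ℝ)
    (P : Matrix (Fin n) (Fin n) ℝ) : ℝ :=
  lamMax (invSqrt P * Phi σ A Abar B Bbar P * invSqrt P)

/-- The trace-normalized slice `S_a = {X symmetric : X ⪰ a·I, Tr X = 1}`. -/
def Slice (a : ℝ) : Set (Matrix (Fin n) (Fin n) ℝ) :=
  {X | X.IsSymm ∧ (X - a • (1 : Matrix (Fin n) (Fin n) ℝ)).PosSemidef ∧ X.trace = 1}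

/-- `α_A = ‖A‖² + σ²·‖Ā‖²` (spectral norms). -/
def alphaA (σ : ℝ) (A Abar : Matrix (Fin n) (Fin n) ℝ) : ℝ :=
  specNorm A ^ 2 + σ ^ 2 * specNorm Abar ^ 2

/-- `α_S = ‖A‖·‖B‖ + σ²·‖Ā‖·‖B̄‖`. -/
def alphaS (σ : ℝ) (A Abar : Matrix (Fin n) (Fin n) ℝ) (B Bbar : Matrix (Fin n) (Fin m) ℝ) : ℝ :=
  specNorm A * specNorm B + σ ^ 2 * specNorm Abar * specNorm Bbar

/-- `α_R = ‖B‖² + σ²·‖B̄‖²`. -/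
def alphaR (σ : ℝ) (B Bbar : Matrix (Fin n) (Fin m) ℝ) : ℝ :=
  specNorm B ^ 2 + σ ^ 2 * specNorm Bbar ^ 2

/-- `c_R(a) = 1/(a·λ_min(R₀))`. -/
def cR (σ : ℝ) (B Bbar : Matrix (Fin n) (Fin m) ℝ) (a : ℝ) : ℝ :=
  1 / (a * lamMin (Bᵀ * B + σ ^ 2 • (Bbarᵀ * Bbar)))

/-- `L_Φ(a) = α_A + 2·α_S²·c_R(a) + α_S²·α_R·c_R(a)²`. -/
def LPhi (σ : ℝ) (A Abar : Matrix (Fin n) (Fin n) ℝ) (B Bbar : Matrix (Fin n) (Fin m) ℝ)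
    (a : ℝ) : ℝ :=
  alphaA σ A Abar + 2 * alphaS σ A Abar B Bbar ^ 2 * cR σ B Bbar a
    + alphaS σ A Abar B Bbar ^ 2 * alphaR σ B Bbar * cR σ B Bbar a ^ 2

/-- `C_Φ(a) = α_A + α_S²·c_R(a)`. -/
def CPhi (σ : ℝ) (A Abar : Matrix (Fin n) (Fin n) ℝ) (B Bbar : Matrix (Fin n) (Fin m) ℝ)
    (a : ℝ) : ℝ :=
  alphaA σ A Abar + alphaS σ A Abar B Bbar ^ 2 * cR σ B Bbar a

/-- The contraction modulus `Λ(τ)`. -/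
def LambdaTau (σ : ℝ) (A Abar : Matrix (Fin n) (Fin n) ℝ) (B Bbar : Matrix (Fin n) (Fin m) ℝ)
    (τ : ℝ) : ℝ :=
  (1 - τ) * LPhi σ A Abar B Bbar (deltaTau σ A Abar τ) / τ
    + (1 - τ) * ((1 - τ) * CPhi σ A Abar B Bbar (deltaTau σ A Abar τ) + τ / (n : ℝ))
        * (n : ℝ) * LPhi σ A Abar B Bbar (deltaTau σ A Abar τ) / τ ^ 2

/-- The directional derivative `DΦ(P)[H]`. -/
def DPhi (σ : ℝ) (A Abar : Matrix (Fin n) (Fin n) ℝ) (B Bbar : Matrix (Fin n) (Fin m) ℝ)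
    (P H : Matrix (Fin n) (Fin n) ℝ) : Matrix (Fin n) (Fin n) ℝ :=
  Aᵀ * H * A + σ ^ 2 • (Abarᵀ * H * Abar)
    - (Aᵀ * H * B + σ ^ 2 • (Abarᵀ * H * Bbar)) * (Rop σ B Bbar P)⁻¹ * (Sop σ A Abar B Bbar P)ᵀ
    - Sop σ A Abar B Bbar P * (Rop σ B Bbar P)⁻¹ * (Bᵀ * H * A + σ ^ 2 • (Bbarᵀ * H * Abar))
    + Sop σ A Abar B Bbar P * (Rop σ B Bbar P)⁻¹ * (Bᵀ * H * B + σ ^ 2 • (Bbarᵀ * H * Bbar))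
        * (Rop σ B Bbar P)⁻¹ * (Sop σ A Abar B Bbar P)ᵀ

/-- `s_τ(P) = Tr((1−τ)·Φ(P) + (τ/n)·I)`. -/
def sTau (σ : ℝ) (A Abar : Matrix (Fin n) (Fin n) ℝ) (B Bbar : Matrix (Fin n) (Fin m) ℝ)
    (τ : ℝ) (P : Matrix (Fin n) (Fin n) ℝ) : ℝ :=
  Matrix.trace ((1 - τ) • Phi σ A Abar B Bbar P + (τ / (n : ℝ)) • (1 : Matrix (Fin n) (Fin n) ℝ))

/-- The directional derivative
`DΦ̂_τ(P)[H] = ((1−τ)/s_τ(P))·(DΦ(P)[H] − Φ̂_τ(P)·Tr(DΦ(P)[H]))`. -/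
def DPhiHat (σ : ℝ) (A Abar : Matrix (Fin n) (Fin n) ℝ) (B Bbar : Matrix (Fin n) (Fin m) ℝ)
    (τ : ℝ) (P H : Matrix (Fin n) (Fin n) ℝ) : Matrix (Fin n) (Fin n) ℝ :=
  ((1 - τ) / sTau σ A Abar B Bbar τ P) •
    (DPhi σ A Abar B Bbar P H
      - Matrix.trace (DPhi σ A Abar B Bbar P H) • PhiHat σ A Abar B Bbar τ P)

/-- The local Lipschitz modulus `Lip(P,τ) = sup{‖DΦ̂_τ(P)[H]‖ : H symmetric, ‖H‖ = 1}`. -/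
def LipMod (σ : ℝ) (A Abar : Matrix (Fin n) (Fin n) ℝ) (B Bbar : Matrix (Fin n) (Fin m) ℝ)
    (τ : ℝ) (P : Matrix (Fin n) (Fin n) ℝ) : ℝ :=
  ⨆ H : {H : Matrix (Fin n) (Fin n) ℝ // H.IsSymm ∧ specNorm H = 1},
    specNorm (DPhiHat σ A Abar B Bbar τ P H.1)

/-! ### Probabilistic definitions -/

/-- The Gaussian measure on `ℝ` with mean `0` and variance `σ²`. -/
def gauss (σ : ℝ) : Measure ℝ := gaussianReal 0 ⟨σ ^ 2, sq_nonneg σ⟩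

/-- The Gaussian expectation `E_ω[((A+Āω)x + (B+B̄ω)v)ᵀ·P·((A+Āω)x + (B+B̄ω)v)]`. -/
def qform (σ : ℝ) (A Abar : Matrix (Fin n) (Fin n) ℝ) (B Bbar : Matrix (Fin n) (Fin m) ℝ)
    (P : Matrix (Fin n) (Fin n) ℝ) (x : Fin n → ℝ) (v : Fin m → ℝ) : ℝ :=
  ∫ s, (((A + s • Abar).mulVec x + (B + s • Bbar).mulVec v) ⬝ᵥ
      P.mulVec ((A + s • Abar).mulVec x + (B + s • Bbar).mulVec v)) ∂(gauss σ)

/-- The data of the stochastic control system: a probability space `(Ω, F, Pr)`,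
system matrices `A, Ā, B, B̄`, a noise level `σ > 0`, an i.i.d. sequence `w` of
Gaussian random variables with mean `0` and variance `σ²`, and a sub-σ-algebra `G`
independent of the noise. -/
structure Ctx (n m : ℕ) (Ω : Type) [mΩ : MeasurableSpace Ω] where
  Pr : Measure Ω
  isProb : IsProbabilityMeasure Pr
  σ : ℝ
  hσ : 0 < σ
  A : Matrix (Fin n) (Fin n) ℝ
  Abar : Matrix (Fin n) (Fin n) ℝ
  B : Matrix (Fin n) (Fin m) ℝ
  Bbar : Matrix (Fin n) (Fin m) ℝ
  w : ℕ → Ω → ℝ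
  hw_meas : ∀ k, Measurable (w k)
  hw_gauss : ∀ k, Pr.map (w k) = gauss σ
  hw_iid : iIndepFun w Pr
  G : MeasurableSpace Ω
  hG : G ≤ mΩ
  hw_indep_G : Indep (⨆ k, MeasurableSpace.comap (w k) inferInstance) G Pr

variable {Ω : Type} [MeasurableSpace Ω]

/-- The filtration `F_k = G ∨ σ(ω₀, …, ω_{k−1})`. -/
def Ctx.Fk (C : Ctx n m Ω) (k : ℕ) : MeasurableSpace Ω :=
  C.G ⊔ ⨆ i ∈ Finset.range k, MeasurableSpace.comap (C.w i) inferInstance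

/-- Admissible policies: `u_k` is `F_k`-measurable and square-integrable. -/
def Ctx.Admissible (C : Ctx n m Ω) (u : ℕ → Ω → Fin m → ℝ) : Prop :=
  ∀ k, Measurable[C.Fk k] (u k) ∧ MemLp (u k) 2 C.Pr

/-- Admissible initial states: `G`-measurable and square-integrable. -/
def Ctx.InitOK (C : Ctx n m Ω) (x : Ω → Fin n → ℝ) : Prop :=
  Measurable[C.G] x ∧ MemLp x 2 C.Pr

/-- The state trajectory `x_{k+1} = (A + Ā·ω_k)x_k + (B + B̄·ω_k)u_k`. -/
def Ctx.traj (C : Ctx n m Ω) (x0 : Ω → Fin n → ℝ) (u : ℕ → Ω → Fin m → ℝ) :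
    ℕ → Ω → Fin n → ℝ
  | 0 => x0
  | k + 1 => fun s =>
      (C.A + C.w k s • C.Abar).mulVec (C.traj x0 u k s)
      + (C.B + C.w k s • C.Bbar).mulVec (u k s)

/-- `E[xᵀx]`. -/
def msSq {n : ℕ} (Pr : Measure Ω) (x : Ω → Fin n → ℝ) : ℝ := ∫ s, x s ⬝ᵥ x s ∂Pr

/-- The mean-square norm `‖x‖_ms = (E[xᵀx])^{1/2}`. -/
def msNorm {n : ℕ} (Pr : Measure Ω) (x : Ω → Fin n → ℝ) : ℝ := Real.sqrt (msSq Pr x)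

/-- The mean-square stabilizing rate `ρ(u)` of a policy. -/
def Ctx.rate (C : Ctx n m Ω) (u : ℕ → Ω → Fin m → ℝ) : ℝ :=
  sInf {ρ : ℝ | 0 ≤ ρ ∧ ∃ κ : ℝ, 0 ≤ κ ∧ ∀ x0, C.InitOK x0 → ∀ k : ℕ,
    msSq C.Pr (C.traj x0 u k) ≤ κ * ρ ^ (2 * k) * msSq C.Pr x0}

/-- The optimal stabilizing rate `ρ* = inf_{u ∈ U} ρ(u)`. -/
def Ctx.rhoStar (C : Ctx n m Ω) : ℝ :=
  sInf {r : ℝ | ∃ u, C.Admissible u ∧ r = C.rate u}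

/-- `η(x) = inf_{u ∈ U} sup_{k ∈ ℕ} ‖x_k‖_ms/(ρ*)^k` (with values in `[0,∞]`). -/
def Ctx.eta (C : Ctx n m Ω) (x : Ω → Fin n → ℝ) : ℝ≥0∞ :=
  ⨅ (u : ℕ → Ω → Fin m → ℝ) (_ : C.Admissible u),
    ⨆ k : ℕ, ENNReal.ofReal (msNorm C.Pr (C.traj x u k) / C.rhoStar ^ k)

/-- The per-trajectory mean-square stabilizing rate `ρ(u; x₀)`. -/
def Ctx.rateAt (C : Ctx n m Ω) (x0 : Ω → Fin n → ℝ) (u : ℕ → Ω → Fin m → ℝ) : ℝ :=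
  sInf {ρ : ℝ | 0 ≤ ρ ∧ ∃ κ : ℝ, 0 ≤ κ ∧ ∀ k : ℕ,
    msSq C.Pr (C.traj x0 u k) ≤ κ * ρ ^ (2 * k) * msSq C.Pr x0}

/-- The cost `J(x₀,u) = limsup_k (1/k)·log(E[x_kᵀx_k]/E[x₀ᵀx₀])`. -/
def Ctx.J (C : Ctx n m Ω) (x0 : Ω → Fin n → ℝ) (u : ℕ → Ω → Fin m → ℝ) : ℝ :=
  Filter.limsup
    (fun k : ℕ => (1 / (k : ℝ)) * Real.log (msSq C.Pr (C.traj x0 u k) / msSq C.Pr x0))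
    Filter.atTop

/-- Feedback policies: `u_k = μ_k(x_k)` for Borel-measurable `μ_k`. -/
def Ctx.IsFeedback (C : Ctx n m Ω) (x0 : Ω → Fin n → ℝ) (u : ℕ → Ω → Fin m → ℝ) : Prop :=
  ∃ μ : ℕ → (Fin n → ℝ) → Fin m → ℝ, (∀ k, Measurable (μ k)) ∧
    ∀ k s, u k s = μ k (C.traj x0 u k s)

/-- The closed-loop trajectory under a stationary feedback law `μ`. -/
def Ctx.fbTraj (C : Ctx n m Ω) (x0 : Ω → Fin n → ℝ) (μ : (Fin n → ℝ) → Fin m → ℝ) :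
    ℕ → Ω → Fin n → ℝ
  | 0 => x0
  | k + 1 => fun s =>
      (C.A + C.w k s • C.Abar).mulVec (C.fbTraj x0 μ k s)
      + (C.B + C.w k s • C.Bbar).mulVec (μ (C.fbTraj x0 μ k s))

/-- The stationary policy `u* given by `u*_k = μ(x*_k)` along its own closed-loop
trajectory, for a stationary feedback law `μ`. -/
def Ctx.fbPolicy (C : Ctx n m Ω) (x0 : Ω → Fin n → ℝ) (μ : (Fin n → ℝ) → Fin m → ℝ) :
    ℕ → Ω → Fin m → ℝ :=
  fun k s => μ (C.fbTraj x0 μ k s)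

/-- The linear feedback policy `u*_k = −K·x*_k` along its own trajectory. -/
def Ctx.linFbPolicy (C : Ctx n m Ω) (x0 : Ω → Fin n → ℝ) (K : Matrix (Fin m) (Fin n) ℝ) :
    ℕ → Ω → Fin m → ℝ :=
  C.fbPolicy x0 (fun x => -(K.mulVec x))

/-- `ξ_♯(x) = inf_{v ∈ ℝ^m} ‖(A + Ā·ω)x + (B + B̄·ω)v‖_ms`, realized with `ω = ω₀`. -/
def Ctx.xiSharp (C : Ctx n m Ω) (x : Ω → Fin n → ℝ) : ℝ :=
  ⨅ v : Fin m → ℝ, msNorm C.Pr (fun s =>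
    (C.A + C.w 0 s • C.Abar).mulVec (x s) + (C.B + C.w 0 s • C.Bbar).mulVec v)

/-- Extended-real logarithm: `log t` for `t > 0` and `−∞` for `t ≤ 0`. -/
def elog (t : ℝ) : EReal := if t ≤ 0 then ⊥ else ((Real.log t : ℝ) : EReal)

/-- The cost `J(x₀,u)` interpreted with values in `[−∞,∞]`. -/
def Ctx.Je (C : Ctx n m Ω) (x0 : Ω → Fin n → ℝ) (u : ℕ → Ω → Fin m → ℝ) : EReal :=
  Filter.limsup
    (fun k : ℕ => ((1 / (k : ℝ) : ℝ) : EReal) * elog (msSq C.Pr (C.traj x0 u k) / msSq C.Pr x0))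
    Filter.atTop


/-! ### Auxiliary lemmas -/

section Aux

open scoped MatrixOrder

lemma psd_smul {k : ℕ} {c : ℝ} (hc : 0 ≤ c) {M : Matrix (Fin k) (Fin k) ℝ}
    (hM : M.PosSemidef) : (c • M).PosSemidef := by
  refine Matrix.PosSemidef.of_dotProduct_mulVec_nonneg ?_ fun x => ?_
  · show (c • M)ᴴ = c • M
    rw [Matrix.conjTranspose_smul, hM.1.eq, star_trivial]
  · rw [Matrix.smul_mulVec, dotProduct_smul, smul_eq_mul]
    exact mul_nonneg hc (hM.dotProduct_mulVec_nonneg x)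

lemma pd_smul {k : ℕ} {c : ℝ} (hc : 0 < c) {M : Matrix (Fin k) (Fin k) ℝ}
    (hM : M.PosDef) : (c • M).PosDef := by
  refine Matrix.PosDef.of_dotProduct_mulVec_pos ?_ fun x hx => ?_
  · show (c • M)ᴴ = c • M
    rw [Matrix.conjTranspose_smul, hM.1.eq, star_trivial]
  · rw [Matrix.smul_mulVec, dotProduct_smul, smul_eq_mul]
    exact mul_pos hc (hM.dotProduct_mulVec_pos hx)

lemma psd_conj {k l : ℕ} {P : Matrix (Fin k) (Fin k) ℝ} (hP : P.PosSemidef)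
    (M : Matrix (Fin k) (Fin l) ℝ) : (Mᵀ * P * M).PosSemidef := by
  have := hP.conjTranspose_mul_mul_same M
  rwa [Matrix.conjTranspose_eq_transpose_of_trivial] at this

lemma psd_trace_nonneg {k : ℕ} {M : Matrix (Fin k) (Fin k) ℝ}
    (hM : M.PosSemidef) : 0 ≤ M.trace := by
  have h : ∀ i, 0 ≤ M i i := by
    intro i
    have := hM.dotProduct_mulVec_nonneg (Pi.single i 1)
    simpa [dotProduct, Matrix.mulVec, Pi.single_apply, Finset.mul_sum] using this
  exact Finset.sum_nonneg fun i _ => h i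

lemma lamMax_bdd {k : ℕ} (M : Matrix (Fin k) (Fin k) ℝ) :
    BddAbove (Set.range fun x : {x : Fin k → ℝ // x ⬝ᵥ x = 1} =>
      x.1 ⬝ᵥ M.mulVec x.1) := by
  refine ⟨∑ i, ∑ j, |M i j|, ?_⟩
  rintro r ⟨⟨x, hx⟩, rfl⟩
  have habs : ∀ i, |x i| ≤ 1 := by
    intro i
    have h1 : x i * x i ≤ 1 := by
      rw [← hx]
      exact Finset.single_le_sum (f := fun j => x j * x j)
        (fun j _ => mul_self_nonneg _) (Finset.mem_univ i)
    nlinarith [abs_nonneg (x i), abs_mul_abs_self (x i)]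
  calc x ⬝ᵥ M.mulVec x = ∑ i, ∑ j, x i * (M i j * x j) := by
        simp [dotProduct, Matrix.mulVec, Finset.mul_sum]
    _ ≤ ∑ i, ∑ j, |M i j| := by
        refine Finset.sum_le_sum fun i _ => Finset.sum_le_sum fun j _ => ?_
        calc x i * (M i j * x j) ≤ |x i * (M i j * x j)| := le_abs_self _
          _ = |x i| * |M i j| * |x j| := by rw [abs_mul, abs_mul]; ring
          _ ≤ 1 * |M i j| * 1 := by
              have h0 : (0:ℝ) ≤ |M i j| := abs_nonneg _
              exact mul_le_mul (mul_le_mul_of_nonneg_right (habs i) h0) (habs j)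
                (abs_nonneg _) (by positivity)
          _ = |M i j| := by ring

lemma quad_le_lamMax {k : ℕ} (M : Matrix (Fin k) (Fin k) ℝ) (y : Fin k → ℝ) :
    y ⬝ᵥ M.mulVec y ≤ lamMax M * (y ⬝ᵥ y) := by
  by_cases hy : y = 0
  · simp [hy]
  · have hyy : 0 < y ⬝ᵥ y := by
      obtain ⟨i, hi⟩ := Function.ne_iff.mp hy
      have h := Finset.sum_pos' (s := Finset.univ) (f := fun j => y j * y j)
        (fun j _ => mul_self_nonneg _) ⟨i, Finset.mem_univ i, mul_self_pos.mpr hi⟩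
      simpa [dotProduct] using h
    set c : ℝ := Real.sqrt (y ⬝ᵥ y) with hc_def
    have hc : 0 < c := Real.sqrt_pos.mpr hyy
    have hcc : c * c = y ⬝ᵥ y := Real.mul_self_sqrt hyy.le
    set x : Fin k → ℝ := c⁻¹ • y with hx_def
    have hx : x ⬝ᵥ x = 1 := by
      rw [hx_def, smul_dotProduct, dotProduct_smul, smul_eq_mul, smul_eq_mul,
        ← hcc]
      field_simp
    have hle : x ⬝ᵥ M.mulVec x ≤ lamMax M :=
      le_ciSup (lamMax_bdd M) (⟨x, hx⟩ : {x : Fin k → ℝ // x ⬝ᵥ x = 1})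
    have hquad : x ⬝ᵥ M.mulVec x = c⁻¹ * c⁻¹ * (y ⬝ᵥ M.mulVec y) := by
      rw [hx_def, smul_dotProduct, Matrix.mulVec_smul, dotProduct_smul,
        smul_eq_mul, smul_eq_mul]
      ring
    have := mul_le_mul_of_nonneg_left hle (le_of_lt (mul_pos hc hc))
    rw [hquad] at this
    calc y ⬝ᵥ M.mulVec y = c * c * (c⁻¹ * c⁻¹ * (y ⬝ᵥ M.mulVec y)) := by
          field_simp
      _ ≤ c * c * lamMax M := this
      _ = lamMax M * (y ⬝ᵥ y) := by rw [hcc]; ring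

lemma lamMax_nonneg {k : ℕ} (hk : 0 < k) {M : Matrix (Fin k) (Fin k) ℝ}
    (hM : M.PosSemidef) : 0 ≤ lamMax M := by
  set x : Fin k → ℝ := Pi.single ⟨0, hk⟩ 1 with hx_def
  have hx : x ⬝ᵥ x = 1 := by simp [hx_def, dotProduct, Pi.single_apply]
  have h0 : 0 ≤ x ⬝ᵥ M.mulVec x := by simpa using hM.dotProduct_mulVec_nonneg x
  exact h0.trans (le_ciSup (lamMax_bdd M) (⟨x, hx⟩ : {x : Fin k → ℝ // x ⬝ᵥ x = 1}))

lemma trace_mul_le_lamMax {k : ℕ} {P : Matrix (Fin k) (Fin k) ℝ}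
    (hP : P.PosSemidef) (M : Matrix (Fin k) (Fin k) ℝ) :
    (P * M).trace ≤ lamMax M * P.trace := by
  set Q := CFC.sqrt P with hQ_def
  have hQQ : Q * Q = P := CFC.sqrt_mul_sqrt_self P hP.nonneg
  have hQsym : Qᵀ = Q := by
    have h := (CFC.sqrt_nonneg P).posSemidef.1.eq
    rwa [Matrix.conjTranspose_eq_transpose_of_trivial] at h
  have hQij : ∀ i j, Q j i = Q i j := by
    intro i j
    conv_lhs => rw [← hQsym]
    rfl
  have htr : (P * M).trace = (Q * M * Q).trace := by
    rw [← hQQ, Matrix.mul_assoc, Matrix.trace_mul_comm]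
  have hentry : ∀ i, (Q * M * Q) i i
      = (fun l => Q i l) ⬝ᵥ M.mulVec (fun l => Q i l) := by
    intro i
    show ∑ j, (Q * M) i j * Q j i = ∑ l, Q i l * (M.mulVec fun l => Q i l) l
    calc ∑ j, (Q * M) i j * Q j i
        = ∑ j, ∑ l, Q i l * (M l j * Q i j) := by
          refine Finset.sum_congr rfl fun j _ => ?_
          rw [hQij i j, Matrix.mul_apply, Finset.sum_mul]
          refine Finset.sum_congr rfl fun l _ => ?_
          ring
      _ = ∑ l, ∑ j, Q i l * (M l j * Q i j) := Finset.sum_comm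
      _ = ∑ l, Q i l * (M.mulVec fun l => Q i l) l := by
          refine Finset.sum_congr rfl fun l _ => ?_
          rw [Matrix.mulVec, dotProduct, Finset.mul_sum]
  have hsum : ∑ i, ((fun l => Q i l) ⬝ᵥ fun l => Q i l) = P.trace := by
    rw [← hQQ]
    refine Finset.sum_congr rfl fun i _ => ?_
    show ∑ l, Q i l * Q i l = (Q * Q) i i
    rw [Matrix.mul_apply]
    exact Finset.sum_congr rfl fun l _ => by rw [hQij i l]
  calc (P * M).trace = ∑ i, (Q * M * Q) i i := htr
    _ ≤ ∑ i, lamMax M * ((fun l => Q i l) ⬝ᵥ fun l => Q i l) := by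
        refine Finset.sum_le_sum fun i _ => ?_
        rw [hentry i]
        exact quad_le_lamMax M _
    _ = lamMax M * P.trace := by rw [← Finset.mul_sum, hsum]

end Aux

set_option maxHeartbeats 1000000 in
/-- `Φ̂_τ` maps the slice `S_{δ_τ}` into itself: for
`P ∈ S_{δ_τ}`, `Tr Φ(P) ≤ C_A`, `(1−τ)Φ(P) + (τ/n)I ⪰ (τ/n)I` with trace at
most `(1−τ)·C_A + τ`, and consequently `Φ̂_τ(P) ⪰ δ_τ·I` with `Tr Φ̂_τ(P) = 1`. -/
theorem phiHat_self_map {n m : ℕ} (hn : 0 < n) (hm : 0 < m)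
    (σ : ℝ) (hσ : 0 < σ)
    (A Abar : Matrix (Fin n) (Fin n) ℝ) (B Bbar : Matrix (Fin n) (Fin m) ℝ)
    (hR0 : (Bᵀ * B + σ ^ 2 • (Bbarᵀ * Bbar)).PosDef)
    (τ : ℝ) (hτ : τ ∈ Set.Ioo (0 : ℝ) 1) :
    ∀ P : Matrix (Fin n) (Fin n) ℝ, P ∈ Slice (deltaTau σ A Abar τ) →
      Matrix.trace (Phi σ A Abar B Bbar P) ≤ CA σ A Abar ∧
      ((1 - τ) • Phi σ A Abar B Bbar P
          + (τ / (n : ℝ)) • (1 : Matrix (Fin n) (Fin n) ℝ)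
          - (τ / (n : ℝ)) • (1 : Matrix (Fin n) (Fin n) ℝ)).PosSemidef ∧
      Matrix.trace ((1 - τ) • Phi σ A Abar B Bbar P
          + (τ / (n : ℝ)) • (1 : Matrix (Fin n) (Fin n) ℝ)) ≤ (1 - τ) * CA σ A Abar + τ ∧
      (PhiHat σ A Abar B Bbar τ P
          - deltaTau σ A Abar τ • (1 : Matrix (Fin n) (Fin n) ℝ)).PosSemidef ∧
      Matrix.trace (PhiHat σ A Abar B Bbar τ P) = 1 ∧
      PhiHat σ A Abar B Bbar τ P ∈ Slice (deltaTau σ A Abar τ) := by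
  intro P hP
  obtain ⟨hPsymm, hPpsd0, hPtr⟩ := hP
  obtain ⟨hτ0, hτ1⟩ := hτ
  have hnR : (0:ℝ) < (n:ℝ) := Nat.cast_pos.mpr hn
  set δ := deltaTau σ A Abar τ with hδ_def
  -- positivity of C_A and δ
  have hAAt : (A * Aᵀ).PosSemidef := by
    have h := psd_conj (Matrix.PosSemidef.one (n := Fin n)) Aᵀ
    simpa [Matrix.mul_one] using h
  have hAbarAbart : (Abar * Abarᵀ).PosSemidef := by
    have h := psd_conj (Matrix.PosSemidef.one (n := Fin n)) Abarᵀ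
    simpa [Matrix.mul_one] using h
  have hMpsd : (A * Aᵀ + σ ^ 2 • (Abar * Abarᵀ)).PosSemidef :=
    hAAt.add (psd_smul (sq_nonneg σ) hAbarAbart)
  have hCA : 0 ≤ CA σ A Abar := lamMax_nonneg hn hMpsd
  have hDpos : 0 < (1 - τ) * CA σ A Abar + τ := by nlinarith
  have hδpos : 0 < δ := by
    rw [hδ_def]; unfold deltaTau
    exact div_pos (div_pos hτ0 hnR) hDpos
  -- P is positive definite
  have hPpd : P.PosDef := by
    have h : P = (P - δ • 1) + δ • 1 := by abel
    rw [h]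
    exact Matrix.PosDef.posSemidef_add hPpsd0 (pd_smul hδpos Matrix.PosDef.one)
  have hPpsd : P.PosSemidef := hPpd.posSemidef
  have hPt : Pᵀ = P := hPsymm
  -- R(P) is positive definite
  set R' := Rop σ B Bbar P with hR'_def
  set S' := Sop σ A Abar B Bbar P with hS'_def
  have hRsplit : R' = (Bᵀ * (P - δ • 1) * B + σ ^ 2 • (Bbarᵀ * (P - δ • 1) * Bbar))
      + δ • (Bᵀ * B + σ ^ 2 • (Bbarᵀ * Bbar)) := by
    rw [hR'_def]; unfold Rop
    simp only [Matrix.mul_sub, Matrix.sub_mul, Matrix.mul_smul, Matrix.smul_mul,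
      Matrix.mul_one, smul_sub, smul_add, smul_smul]
    module
  have hRpd : R'.PosDef := by
    rw [hRsplit]
    exact Matrix.PosDef.posSemidef_add ((psd_conj hPpsd0 B).add
      (psd_smul (sq_nonneg σ) (psd_conj hPpsd0 Bbar))) (pd_smul hδpos hR0)
  have hRdet : IsUnit R'.det := (Matrix.isUnit_iff_isUnit_det _).mp hRpd.isUnit
  have hRsym : R'ᵀ = R' := by
    have h := hRpd.isHermitian.eq
    rwa [Matrix.conjTranspose_eq_transpose_of_trivial] at h
  have hRinvSym : (R'⁻¹)ᵀ = R'⁻¹ := by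
    rw [Matrix.transpose_nonsing_inv, hRsym]
  set K := R'⁻¹ * S'ᵀ with hK_def
  have hKt : Kᵀ = S' * R'⁻¹ := by
    rw [hK_def, Matrix.transpose_mul, Matrix.transpose_transpose, hRinvSym]
  -- the completion-of-squares identity
  have hPhiEq : Phi σ A Abar B Bbar P
      = (A - B * K)ᵀ * P * (A - B * K)
        + σ ^ 2 • ((Abar - Bbar * K)ᵀ * P * (Abar - Bbar * K)) := by
    have hexp : (A - B * K)ᵀ * P * (A - B * K)
        + σ ^ 2 • ((Abar - Bbar * K)ᵀ * P * (Abar - Bbar * K))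
        = (Aᵀ * P * A + σ ^ 2 • (Abarᵀ * P * Abar)) - S' * K - Kᵀ * S'ᵀ + Kᵀ * R' * K := by
      rw [hS'_def, hR'_def]; unfold Sop Rop
      simp only [Matrix.transpose_sub, Matrix.transpose_add, Matrix.transpose_smul,
        Matrix.transpose_mul, Matrix.transpose_transpose, Matrix.sub_mul,
        Matrix.mul_sub, Matrix.add_mul, Matrix.mul_add, Matrix.smul_mul, Matrix.mul_smul,
        smul_sub, smul_add, Matrix.mul_assoc, hPt]
      module
    rw [hexp]
    have h1 : S' * K = S' * R'⁻¹ * S'ᵀ := by rw [hK_def, ← Matrix.mul_assoc]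
    have h2 : Kᵀ * S'ᵀ = S' * R'⁻¹ * S'ᵀ := by rw [hKt]
    have h3 : Kᵀ * R' * K = S' * R'⁻¹ * S'ᵀ := by
      rw [hKt, Matrix.nonsing_inv_mul_cancel_right _ _ hRdet, hK_def, ← Matrix.mul_assoc]
    rw [h1, h2, h3]
    unfold Phi
    rw [← hS'_def, ← hR'_def]
    abel
  have hPhiPsd : (Phi σ A Abar B Bbar P).PosSemidef := by
    rw [hPhiEq]
    exact (psd_conj hPpsd _).add (psd_smul (sq_nonneg σ) (psd_conj hPpsd _))
  have hPhiSym : (Phi σ A Abar B Bbar P)ᵀ = Phi σ A Abar B Bbar P := by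
    have h := hPhiPsd.isHermitian.eq
    rwa [Matrix.conjTranspose_eq_transpose_of_trivial] at h
  -- trace bound (a)
  have hSRSpsd : (S' * R'⁻¹ * S'ᵀ).PosSemidef := by
    have h : S' * R'⁻¹ * S'ᵀ = (S'ᵀ)ᵀ * R'⁻¹ * S'ᵀ := by rw [Matrix.transpose_transpose]
    rw [h]
    exact psd_conj hRpd.inv.posSemidef S'ᵀ
  have htrQ : Matrix.trace (Aᵀ * P * A + σ ^ 2 • (Abarᵀ * P * Abar))
      = Matrix.trace (P * (A * Aᵀ + σ ^ 2 • (Abar * Abarᵀ))) := by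
    have e1 : (Aᵀ * P * A).trace = (P * (A * Aᵀ)).trace := by
      rw [Matrix.trace_mul_cycle Aᵀ P A, Matrix.trace_mul_comm]
    have e2 : (Abarᵀ * P * Abar).trace = (P * (Abar * Abarᵀ)).trace := by
      rw [Matrix.trace_mul_cycle Abarᵀ P Abar, Matrix.trace_mul_comm]
    rw [Matrix.trace_add, Matrix.trace_smul, Matrix.mul_add, Matrix.trace_add,
      Matrix.mul_smul, Matrix.trace_smul, e1, e2]
  have htrPhi : Matrix.trace (Phi σ A Abar B Bbar P) ≤ CA σ A Abar := by
    have hstep : Matrix.trace (Phi σ A Abar B Bbar P)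
        ≤ Matrix.trace (Aᵀ * P * A + σ ^ 2 • (Abarᵀ * P * Abar)) := by
      unfold Phi
      rw [← hS'_def, ← hR'_def, Matrix.trace_sub]
      linarith [psd_trace_nonneg hSRSpsd]
    calc Matrix.trace (Phi σ A Abar B Bbar P)
        ≤ Matrix.trace (P * (A * Aᵀ + σ ^ 2 • (Abar * Abarᵀ))) := htrQ ▸ hstep
      _ ≤ lamMax (A * Aᵀ + σ ^ 2 • (Abar * Abarᵀ)) * P.trace := trace_mul_le_lamMax hPpsd _
      _ = CA σ A Abar := by rw [hPtr]; unfold CA; ring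
  refine ⟨htrPhi, ?_, ?_, ?_, ?_, ?_⟩
  · have h : (1 - τ) • Phi σ A Abar B Bbar P + (τ / (n : ℝ)) • (1 : Matrix (Fin n) (Fin n) ℝ)
        - (τ / (n : ℝ)) • (1 : Matrix (Fin n) (Fin n) ℝ) = (1 - τ) • Phi σ A Abar B Bbar P := by
      abel
    rw [h]
    exact psd_smul (by linarith) hPhiPsd
  · rw [Matrix.trace_add, Matrix.trace_smul, Matrix.trace_smul, Matrix.trace_one]
    have hcard : (Fintype.card (Fin n) : ℝ) = (n : ℝ) := by simp
    rw [hcard]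
    have h2 : (τ / (n : ℝ)) * (n : ℝ) = τ := div_mul_cancel₀ τ hnR.ne'
    rw [smul_eq_mul, smul_eq_mul, h2]
    have := mul_le_mul_of_nonneg_left htrPhi (by linarith : (0:ℝ) ≤ 1 - τ)
    linarith
  all_goals {
    -- shared setup for the Φ̂ statements
    set s : ℝ := Matrix.trace ((1 - τ) • Phi σ A Abar B Bbar P
      + (τ / (n : ℝ)) • (1 : Matrix (Fin n) (Fin n) ℝ)) with hs_def
    have hs_eq : s = (1 - τ) * Matrix.trace (Phi σ A Abar B Bbar P) + τ := by
      rw [hs_def, Matrix.trace_add, Matrix.trace_smul, Matrix.trace_smul, Matrix.trace_one]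
      have hcard : (Fintype.card (Fin n) : ℝ) = (n : ℝ) := by simp
      rw [hcard, smul_eq_mul, smul_eq_mul, div_mul_cancel₀ τ hnR.ne']
    have htrPhi0 : 0 ≤ Matrix.trace (Phi σ A Abar B Bbar P) := psd_trace_nonneg hPhiPsd
    have hs_pos : 0 < s := by rw [hs_eq]; nlinarith
    have hs_le : s ≤ (1 - τ) * CA σ A Abar + τ := by
      rw [hs_eq]
      have := mul_le_mul_of_nonneg_left htrPhi (by linarith : (0:ℝ) ≤ 1 - τ)
      linarith
    have hPhiHat_eq : PhiHat σ A Abar B Bbar τ P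
        = s⁻¹ • ((1 - τ) • Phi σ A Abar B Bbar P
          + (τ / (n : ℝ)) • (1 : Matrix (Fin n) (Fin n) ℝ)) := rfl
    have hδle : δ ≤ s⁻¹ * (τ / (n : ℝ)) := by
      rw [hδ_def]; unfold deltaTau
      have h1 : τ / (n : ℝ) / ((1 - τ) * CA σ A Abar + τ) * s ≤ τ / (n : ℝ) := by
        calc τ / (n : ℝ) / ((1 - τ) * CA σ A Abar + τ) * s
            ≤ τ / (n : ℝ) / ((1 - τ) * CA σ A Abar + τ) * ((1 - τ) * CA σ A Abar + τ) :=
              mul_le_mul_of_nonneg_left hs_le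
                (le_of_lt (div_pos (div_pos hτ0 hnR) hDpos))
          _ = τ / (n : ℝ) := div_mul_cancel₀ _ hDpos.ne'
      calc τ / (n : ℝ) / ((1 - τ) * CA σ A Abar + τ)
          ≤ τ / (n : ℝ) / s := (le_div_iff₀ hs_pos).mpr h1
        _ = s⁻¹ * (τ / (n : ℝ)) := by rw [div_eq_inv_mul]
    have hsplit : PhiHat σ A Abar B Bbar τ P - δ • (1 : Matrix (Fin n) (Fin n) ℝ)
        = (s⁻¹ * (1 - τ)) • Phi σ A Abar B Bbar P
          + (s⁻¹ * (τ / (n : ℝ)) - δ) • (1 : Matrix (Fin n) (Fin n) ℝ) := by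
      rw [hPhiHat_eq]
      module
    have hcPsd : (PhiHat σ A Abar B Bbar τ P
        - δ • (1 : Matrix (Fin n) (Fin n) ℝ)).PosSemidef := by
      rw [hsplit]
      refine (psd_smul ?_ hPhiPsd).add (psd_smul ?_ Matrix.PosSemidef.one)
      · exact mul_nonneg (inv_nonneg.mpr hs_pos.le) (by linarith)
      · linarith
    have hcTr : Matrix.trace (PhiHat σ A Abar B Bbar τ P) = 1 := by
      rw [hPhiHat_eq, Matrix.trace_smul, ← hs_def, smul_eq_mul, inv_mul_cancel₀ hs_pos.ne']
    have hcSym : (PhiHat σ A Abar B Bbar τ P).IsSymm := by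
      show (PhiHat σ A Abar B Bbar τ P)ᵀ = PhiHat σ A Abar B Bbar τ P
      rw [hPhiHat_eq]
      rw [Matrix.transpose_smul, Matrix.transpose_add, Matrix.transpose_smul,
        Matrix.transpose_smul, Matrix.transpose_one, hPhiSym]
    first
      | exact hcPsd
      | exact hcTr
      | exact ⟨hcSym, hcPsd, hcTr⟩
  }

end SCS
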